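/- Let X be a real Banach space and 0 < p < ∞. For a series ∑_i x_i in X, the following are equivalent: (1) ∑_i x_i is weakly unconditionally Cauchy; (2) S_{w_p}(∑ x_i) is complete; (3) c_0 ⊆ S_{w_p}(∑ x_i). -/

import Mathlib

open Filter Finset BoundedContinuousFunction

def StrongCesaro {X : Type*} [NormedAddCommGroup X] (p : ℝ) (x : ℕ → X) (L : X) : Prop :=
  Tendsto (fun n : ℕ => (n : ℝ)⁻¹ * ∑ k ∈ range n, ‖x k - L‖ ^ p) atTop (nhds 0)



lemma cesaro_frequently {c : ℕ → ℝ} (hc : ∀ n, 0 ≤ c n)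
    (h : Tendsto (fun n : ℕ => (n:ℝ)⁻¹ * ∑ k ∈ range n, c k) atTop (nhds 0))
    {ε : ℝ} (hε : 0 < ε) : ∃ᶠ n in atTop, c n < ε := by
  by_contra hcon
  rw [Filter.not_frequently] at hcon
  simp only [not_lt] at hcon
  obtain ⟨N, hN⟩ := hcon.exists_forall_of_atTop
  have h2 := (h.eventually (gt_mem_nhds (half_pos hε))).exists_forall_of_atTop
  obtain ⟨M, hM⟩ := h2
  set n := max (2*N) (max M 1) with hn
  have hn1 : 1 ≤ n := le_max_of_le_right (le_max_right _ _)
  have hnpos : (0:ℝ) < n := by exact_mod_cast hn1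
  have key : (n:ℝ)⁻¹ * ∑ k ∈ range n, c k < ε/2 := hM n (le_max_of_le_right (le_max_left _ _))
  have hsum : (n - N : ℝ) * ε ≤ ∑ k ∈ range n, c k := by
    have hNn : N ≤ n := le_trans (Nat.le_mul_of_pos_left N (by norm_num)) (le_max_left _ _)
    calc (n - N : ℝ) * ε = ∑ k ∈ Ico N n, ε := by
          rw [Finset.sum_const, Nat.card_Ico, nsmul_eq_mul]
          push_cast [Nat.cast_sub hNn]; ring
      _ ≤ ∑ k ∈ Ico N n, c k := Finset.sum_le_sum fun k hk => hN k (Finset.mem_Ico.mp hk).1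
      _ ≤ ∑ k ∈ range n, c k := Finset.sum_le_sum_of_subset_of_nonneg
          (by rw [Finset.range_eq_Ico]; exact Finset.Ico_subset_Ico (Nat.zero_le _) le_rfl)
          (fun k _ _ => hc k)
  have h2N : (2*N : ℕ) ≤ n := le_max_left _ _
  have : ε/2 ≤ (n:ℝ)⁻¹ * ∑ k ∈ range n, c k := by
    have hcast : (2*N : ℝ) ≤ (n:ℝ) := by exact_mod_cast h2N
    have : ε/2 ≤ (n:ℝ)⁻¹ * ((n - N:ℝ) * ε) := by
      have hhalf : (1:ℝ)/2 ≤ ((n:ℝ) - N)/n := by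
        rw [div_le_div_iff₀ two_pos hnpos]; linarith
      calc ε/2 = (1/2)*ε := by ring
        _ ≤ (((n:ℝ)-N)/n)*ε := mul_le_mul_of_nonneg_right hhalf hε.le
        _ = (n:ℝ)⁻¹ * ((n - N:ℝ) * ε) := by ring
    calc ε/2 ≤ (n:ℝ)⁻¹ * ((n-N:ℝ)*ε) := this
      _ ≤ _ := by
        apply mul_le_mul_of_nonneg_left hsum (by positivity)
  linarith

lemma rpow_add_le {u v p : ℝ} (hu : 0 ≤ u) (hv : 0 ≤ v) (hp : 0 < p) :
    (u + v) ^ p ≤ 2 ^ p * (u ^ p + v ^ p) := by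
  have h1 : u + v ≤ 2 * max u v := by rcases max_cases u v with ⟨h,_⟩|⟨h,_⟩ <;> rw [h] <;> nlinarith [le_max_left u v, le_max_right u v]
  calc (u+v)^p ≤ (2 * max u v)^p := Real.rpow_le_rpow (by positivity) h1 hp.le
    _ = 2^p * (max u v)^p := Real.mul_rpow (by norm_num) (le_max_of_le_left hu)
    _ ≤ 2^p * (u^p + v^p) := by
        apply mul_le_mul_of_nonneg_left _ (by positivity)
        rcases max_cases u v with ⟨h,_⟩|⟨h,_⟩ <;> rw [h] <;>
          [exact le_add_of_nonneg_right (Real.rpow_nonneg hv p);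
           exact le_add_of_nonneg_left (Real.rpow_nonneg hu p)]


/-- The `w_p`-summability space of a series, viewed inside `ℓ∞ = (ℕ →ᵇ ℝ)`. -/
def SwpSpace {X : Type*} [NormedAddCommGroup X] [NormedSpace ℝ X]
    (p : ℝ) (x : ℕ → X) : Set (ℕ →ᵇ ℝ) :=
  {a : ℕ →ᵇ ℝ | ∃ L : X, StrongCesaro p (fun n => ∑ i ∈ range n, a i • x i) L}




section X
variable {X : Type*} [NormedAddCommGroup X] [NormedSpace ℝ X]


lemma wuc_bound {x : ℕ → X}
    (hx : ∀ f : X →L[ℝ] ℝ, Summable fun i => |f (x i)|) :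
    ∃ H : ℝ, 0 ≤ H ∧ ∀ (c : ℕ → ℝ) (M : ℝ) (n : ℕ), (∀ i, |c i| ≤ M) →
      ‖∑ i ∈ range n, c i • x i‖ ≤ M * H := by
  set ι := {q : (ℕ → ℝ) × ℕ // ∀ i, |q.1 i| ≤ 1} with hι
  set g : ι → StrongDual ℝ (StrongDual ℝ X) := fun q =>
    NormedSpace.inclusionInDoubleDualLi ℝ (∑ i ∈ range q.1.2, q.1.1 i • x i) with hg
  have hbd : ∀ f : StrongDual ℝ X, ∃ C, ∀ q : ι, ‖g q f‖ ≤ C := by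
    intro f
    refine ⟨∑' i, |f (x i)|, fun q => ?_⟩
    have : g q f = ∑ i ∈ range q.1.2, q.1.1 i * f (x i) := by
      simp [hg, NormedSpace.inclusionInDoubleDualLi, NormedSpace.dual_def,
        map_sum, map_smul, smul_eq_mul]
    rw [this, Real.norm_eq_abs]
    calc |∑ i ∈ range q.1.2, q.1.1 i * f (x i)|
        ≤ ∑ i ∈ range q.1.2, |q.1.1 i * f (x i)| := Finset.abs_sum_le_sum_abs _ _
      _ ≤ ∑ i ∈ range q.1.2, |f (x i)| := by
          apply Finset.sum_le_sum; intro i _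
          rw [abs_mul]
          exact mul_le_of_le_one_left (abs_nonneg _) (q.2 i)
      _ ≤ ∑' i, |f (x i)| := Summable.sum_le_tsum _ (fun i _ => abs_nonneg _) (hx f)
  obtain ⟨C, hC⟩ := banach_steinhaus hbd
  refine ⟨max C 0, le_max_right _ _, ?_⟩
  intro c M n hc
  have hM0 : 0 ≤ M := le_trans (abs_nonneg _) (hc 0)
  rcases eq_or_lt_of_le hM0 with hM | hM
  · have : ∀ i, c i = 0 := fun i => abs_eq_zero.mp (le_antisymm (hM ▸ hc i) (abs_nonneg _))
    simp [this, ← hM]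
  · set c' : ℕ → ℝ := fun i => c i / M with hc'
    have hq : ∀ i, |c' i| ≤ 1 := by
      intro i; rw [hc', abs_div, abs_of_pos hM, div_le_one hM]; exact hc i
    have hnorm : ‖∑ i ∈ range n, c' i • x i‖ ≤ C := by
      have := hC ⟨(c', n), hq⟩
      rwa [hg, (NormedSpace.inclusionInDoubleDualLi ℝ (E := X)).norm_map] at this
    have heq : ∑ i ∈ range n, c i • x i = M • ∑ i ∈ range n, c' i • x i := by
      rw [Finset.smul_sum]
      apply Finset.sum_congr rfl; intro i _
      rw [smul_smul, hc', mul_div_cancel₀ _ (ne_of_gt hM)]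
    rw [heq, norm_smul, Real.norm_eq_abs, abs_of_pos hM]
    calc M * ‖∑ i ∈ range n, c' i • x i‖ ≤ M * C := by
          exact mul_le_mul_of_nonneg_left hnorm hM.le
      _ ≤ M * max C 0 := mul_le_mul_of_nonneg_left (le_max_left _ _) hM.le


lemma strongCesaro_two_frequently {p : ℝ} (hp : 0 < p) {u v : ℕ → X} {L M : X}
    (hu : StrongCesaro p u L) (hv : StrongCesaro p v M) {ε : ℝ} (hε : 0 < ε) :
    ∃ᶠ n in atTop, ‖u n - L‖ < ε ∧ ‖v n - M‖ < ε := by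
  have hsum : Tendsto (fun n : ℕ =>
      (n:ℝ)⁻¹ * ∑ k ∈ range n, (‖u k - L‖^p + ‖v k - M‖^p)) atTop (nhds 0) := by
    have := hu.add hv
    simpa [Finset.sum_add_distrib, mul_add] using this
  have hfr := cesaro_frequently (c := fun k => ‖u k - L‖^p + ‖v k - M‖^p)
    (fun n => by positivity) hsum (ε := ε^p) (by positivity)
  refine hfr.mono fun n hn => ⟨?_, ?_⟩
  · have h1 : ‖u n - L‖^p < ε^p :=
      lt_of_le_of_lt (le_add_of_nonneg_right (by positivity)) hn
    by_contra hcon; push_neg at hcon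
    exact absurd h1 (not_lt.mpr (Real.rpow_le_rpow hε.le hcon hp.le))
  · have h1 : ‖v n - M‖^p < ε^p :=
      lt_of_le_of_lt (le_add_of_nonneg_left (by positivity)) hn
    by_contra hcon; push_neg at hcon
    exact absurd h1 (not_lt.mpr (Real.rpow_le_rpow hε.le hcon hp.le))

lemma strongCesaro_of_close {p : ℝ} (hp : 0 < p) {u : ℕ → X} {L : X}
    (h : ∀ ε : ℝ, 0 < ε → ∃ (v : ℕ → X) (M : X), StrongCesaro p v M ∧
      (∀ n, ‖u n - v n‖ ≤ ε) ∧ ‖M - L‖ ≤ ε) :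
    StrongCesaro p u L := by
  rw [StrongCesaro, Metric.tendsto_atTop]
  intro δ hδ
  have h4p : (0:ℝ) < 4^p := Real.rpow_pos_of_pos (by norm_num) p
  set ε : ℝ := ((δ/2) / 4^p) ^ (1/p) with hεdef
  have hε : 0 < ε := Real.rpow_pos_of_pos (by positivity) _
  have hεp : ε ^ p = (δ/2) / 4^p := by
    rw [hεdef, ← Real.rpow_mul (by positivity), one_div, inv_mul_cancel₀ hp.ne', Real.rpow_one]
  have hkey : 2^p * (2*ε)^p = δ/2 := by
    have : (2:ℝ)^p * (2*ε)^p = (2*(2*ε))^p := (Real.mul_rpow (by norm_num) (by positivity)).symm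
    rw [this, show (2:ℝ)*(2*ε) = 4*ε by ring, Real.mul_rpow (by norm_num) hε.le, hεp]
    field_simp
  obtain ⟨v, M, hvM, hclose, hML⟩ := h ε hε
  have hterm : ∀ k, ‖u k - L‖^p ≤ 2^p * (‖v k - M‖^p + (2*ε)^p) := by
    intro k
    have h1 : ‖u k - L‖ ≤ ‖v k - M‖ + 2*ε := by
      calc ‖u k - L‖ = ‖(u k - v k) + (v k - M) + (M - L)‖ := by
            rw [show u k - L = (u k - v k) + (v k - M) + (M - L) by abel]
        _ ≤ ‖u k - v k‖ + ‖v k - M‖ + ‖M - L‖ := norm_add₃_le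
        _ ≤ ‖v k - M‖ + 2*ε := by linarith [hclose k, hML]
    calc ‖u k - L‖^p ≤ (‖v k - M‖ + 2*ε)^p :=
          Real.rpow_le_rpow (norm_nonneg _) h1 hp.le
      _ ≤ 2^p * (‖v k - M‖^p + (2*ε)^p) := rpow_add_le (norm_nonneg _) (by positivity) hp
  have hev : ∀ᶠ n : ℕ in atTop, 2^p * ((n:ℝ)⁻¹ * ∑ k ∈ range n, ‖v k - M‖^p) < δ/2 := by
    have h0 : (2:ℝ)^p * 0 < δ/2 := by simpa using half_pos hδ
    have := (hvM.const_mul ((2:ℝ)^p)).eventually (gt_mem_nhds h0)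
    simpa using this
  rw [eventually_atTop] at hev
  obtain ⟨N, hN⟩ := hev
  refine ⟨max N 1, fun n hn => ?_⟩
  have hn1 : 1 ≤ n := le_trans (le_max_right _ _) hn
  have hnN : N ≤ n := le_trans (le_max_left _ _) hn
  have hnpos : (0:ℝ) < n := by exact_mod_cast hn1
  have hmean : (n:ℝ)⁻¹ * ∑ k ∈ range n, ‖u k - L‖^p ≤
      2^p * ((n:ℝ)⁻¹ * ∑ k ∈ range n, ‖v k - M‖^p) + 2^p * (2*ε)^p := by
    have hsum2 : ∑ k ∈ range n, 2^p*(‖v k - M‖^p + (2*ε)^p) =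
        2^p * (∑ k ∈ range n, ‖v k - M‖^p) + n * (2^p * (2*ε)^p) := by
      simp [mul_add, Finset.sum_add_distrib, ← Finset.mul_sum, Finset.sum_const,
        card_range, nsmul_eq_mul]
    calc (n:ℝ)⁻¹ * ∑ k ∈ range n, ‖u k - L‖^p
        ≤ (n:ℝ)⁻¹ * ∑ k ∈ range n, 2^p*(‖v k - M‖^p + (2*ε)^p) :=
          mul_le_mul_of_nonneg_left (Finset.sum_le_sum fun k _ => hterm k) (by positivity)
      _ = 2^p * ((n:ℝ)⁻¹ * ∑ k ∈ range n, ‖v k - M‖^p) + (n:ℝ)⁻¹ * ((n:ℝ) * (2^p * (2*ε)^p)) := by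
          rw [hsum2]; ring
      _ = 2^p * ((n:ℝ)⁻¹ * ∑ k ∈ range n, ‖v k - M‖^p) + 2^p * (2*ε)^p := by
          rw [inv_mul_cancel_left₀ hnpos.ne']
  have hnonneg : 0 ≤ (n:ℝ)⁻¹ * ∑ k ∈ range n, ‖u k - L‖^p := by positivity
  rw [Real.dist_eq, sub_zero, abs_of_nonneg hnonneg]
  calc (n:ℝ)⁻¹ * ∑ k ∈ range n, ‖u k - L‖^p
      ≤ 2^p * ((n:ℝ)⁻¹ * ∑ k ∈ range n, ‖v k - M‖^p) + 2^p * (2*ε)^p := hmean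
    _ < δ/2 + δ/2 := by rw [hkey]; exact add_lt_add_left (hN n hnN) _
    _ = δ := by ring





lemma mySign_mul_self (t : ℝ) : Real.sign t * t = |t| := by
  rcases lt_trichotomy t 0 with h|h|h
  · rw [Real.sign_of_neg h, abs_of_neg h]; ring
  · simp [h]
  · rw [Real.sign_of_pos h, abs_of_pos h, one_mul]

lemma abs_sign_le_one (t : ℝ) : |Real.sign t| ≤ 1 := by
  rcases lt_trichotomy t 0 with h|h|h
  · rw [Real.sign_of_neg h]; norm_num
  · simp [h, Real.sign_zero]
  · rw [Real.sign_of_pos h]; norm_num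

-- (1) → (2)
lemma one_imp_two [CompleteSpace X] {p : ℝ} (hp : 0 < p) {x : ℕ → X}
    (h1 : ∀ f : X →L[ℝ] ℝ, Summable fun i => |f (x i)|) :
    IsComplete (SwpSpace p x) := by
  obtain ⟨H, hH0, hHb⟩ := wuc_bound h1
  apply IsClosed.isComplete
  apply isClosed_of_closure_subset
  intro a ha
  rw [Metric.mem_closure_iff] at ha
  have hbk : ∀ k : ℕ, ∃ b ∈ SwpSpace p x, dist a b < ((k:ℝ)+1)⁻¹ :=
    fun k => ha _ (by positivity)
  choose b hb hdist using hbk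
  choose Lb hLb using fun k => hb k
  set S : (ℕ →ᵇ ℝ) → ℕ → X := fun u n => ∑ i ∈ range n, u i • x i with hS
  have hSdiff : ∀ (u v : ℕ →ᵇ ℝ) (n : ℕ), ‖S u n - S v n‖ ≤ dist u v * H := by
    intro u v n
    have heq : S u n - S v n = ∑ i ∈ range n, (u i - v i) • x i := by
      rw [hS]; simp only [← Finset.sum_sub_distrib, sub_smul]
    rw [heq]
    exact hHb _ _ n (fun i => by
      rw [← Real.dist_eq]; exact BoundedContinuousFunction.dist_coe_le_dist i)
  have hLbd : ∀ k m : ℕ, ‖Lb k - Lb m‖ ≤ (((k:ℝ)+1)⁻¹ + ((m:ℝ)+1)⁻¹) * H := by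
    intro k m
    have hd : dist (b k) (b m) ≤ ((k:ℝ)+1)⁻¹ + ((m:ℝ)+1)⁻¹ := by
      calc dist (b k) (b m) ≤ dist (b k) a + dist a (b m) := dist_triangle _ _ _
        _ ≤ ((k:ℝ)+1)⁻¹ + ((m:ℝ)+1)⁻¹ := by
            rw [dist_comm (b k) a]
            exact add_le_add (hdist k).le (hdist m).le
    apply le_of_forall_pos_le_add
    intro ε hε
    obtain ⟨n, hn1, hn2⟩ := (strongCesaro_two_frequently hp (hLb k) (hLb m) (half_pos hε)).exists
    calc ‖Lb k - Lb m‖ = ‖(Lb k - S (b k) n) + (S (b k) n - S (b m) n) + (S (b m) n - Lb m)‖ := by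
          rw [show Lb k - Lb m = (Lb k - S (b k) n) + (S (b k) n - S (b m) n) + (S (b m) n - Lb m) by abel]
      _ ≤ ‖Lb k - S (b k) n‖ + ‖S (b k) n - S (b m) n‖ + ‖S (b m) n - Lb m‖ := norm_add₃_le
      _ ≤ ε/2 + dist (b k) (b m) * H + ε/2 := by
          rw [norm_sub_rev (Lb k)]
          have := hSdiff (b k) (b m) n
          linarith [hn1, hn2, this]
      _ ≤ (((k:ℝ)+1)⁻¹ + ((m:ℝ)+1)⁻¹) * H + ε := by
          nlinarith [mul_le_mul_of_nonneg_right hd hH0]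
  have hcauchy : CauchySeq Lb := by
    apply cauchySeq_of_le_tendsto_0 (fun N : ℕ => 2 * ((N:ℝ)+1)⁻¹ * H)
    · intro n m N hn hm
      rw [dist_eq_norm]
      calc ‖Lb n - Lb m‖ ≤ (((n:ℝ)+1)⁻¹ + ((m:ℝ)+1)⁻¹) * H := hLbd n m
        _ ≤ 2 * ((N:ℝ)+1)⁻¹ * H := by
            apply mul_le_mul_of_nonneg_right _ hH0
            have h1 : ((n:ℝ)+1)⁻¹ ≤ ((N:ℝ)+1)⁻¹ := by
              apply inv_anti₀ (by positivity)
              exact add_le_add_left (by exact_mod_cast hn) 1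
            have h2 : ((m:ℝ)+1)⁻¹ ≤ ((N:ℝ)+1)⁻¹ := by
              apply inv_anti₀ (by positivity)
              exact add_le_add_left (by exact_mod_cast hm) 1
            linarith
    · have h0 : Tendsto (fun N : ℕ => ((N:ℝ)+1)⁻¹) atTop (nhds 0) := by
        apply Tendsto.inv_tendsto_atTop
        exact tendsto_atTop_add_const_right atTop 1 tendsto_natCast_atTop_atTop
      have := (h0.const_mul 2).mul_const H
      simpa [mul_assoc] using this
  obtain ⟨L, hLlim⟩ := cauchySeq_tendsto_of_complete hcauchy
  refine ⟨L, ?_⟩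
  apply strongCesaro_of_close hp
  intro ε hε
  have h1 : ∀ᶠ k in atTop, ‖Lb k - L‖ ≤ ε := by
    have := hLlim.eventually (Metric.closedBall_mem_nhds L hε)
    simpa [dist_eq_norm] using this
  have h2 : ∀ᶠ k : ℕ in atTop, ((k:ℝ)+1)⁻¹ * H ≤ ε := by
    have h0 : Tendsto (fun k : ℕ => ((k:ℝ)+1)⁻¹ * H) atTop (nhds 0) := by
      have h0' : Tendsto (fun N : ℕ => ((N:ℝ)+1)⁻¹) atTop (nhds 0) := by
        apply Tendsto.inv_tendsto_atTop
        exact tendsto_atTop_add_const_right atTop 1 tendsto_natCast_atTop_atTop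
      simpa using h0'.mul_const H
    exact h0.eventually_le_const hε
  obtain ⟨k, hk1, hk2⟩ := (h1.and h2).exists
  refine ⟨S (b k), Lb k, hLb k, fun n => ?_, hk1⟩
  calc ‖(∑ i ∈ range n, a i • x i) - S (b k) n‖ = ‖S a n - S (b k) n‖ := rfl
    _ ≤ dist a (b k) * H := hSdiff a (b k) n
    _ ≤ ((k:ℝ)+1)⁻¹ * H := mul_le_mul_of_nonneg_right (hdist k).le hH0
    _ ≤ ε := hk2

-- (2) → (3)
lemma two_imp_three {p : ℝ} (hp : 0 < p) {x : ℕ → X}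
    (h2 : IsComplete (SwpSpace p x)) :
    ∀ a : ℕ → ℝ, Tendsto a atTop (nhds 0) →
      ∃ L : X, StrongCesaro p (fun n => ∑ i ∈ range n, a i • x i) L := by
  intro a ha
  have habs : Tendsto (fun i => |a i|) atTop (nhds 0) := by
    simpa using ha.abs
  obtain ⟨C, hC⟩ := habs.bddAbove_range
  have hCb : ∀ i, |a i| ≤ C := fun i => hC (Set.mem_range_self i)
  have hC0 : 0 ≤ C := le_trans (abs_nonneg (a 0)) (hCb 0)
  set A : ℕ →ᵇ ℝ := BoundedContinuousFunction.ofNormedAddCommGroup a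
    continuous_of_discreteTopology C (fun i => by simpa using hCb i) with hA
  have hAcoe : ∀ i, A i = a i := fun i => rfl
  -- truncations
  have htrunc : ∀ k : ℕ, ∃ B : ℕ →ᵇ ℝ, B ∈ SwpSpace p x ∧ ∀ i, B i = if i < k then a i else 0 := by
    intro k
    set g : ℕ → ℝ := fun i => if i < k then a i else 0 with hg
    have hgb : ∀ i, ‖g i‖ ≤ C := by
      intro i; rw [hg]; dsimp only
      split
      · simpa using hCb i
      · simpa using hC0
    refine ⟨BoundedContinuousFunction.ofNormedAddCommGroup g
      continuous_of_discreteTopology C hgb, ?_, fun i => rfl⟩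
    refine ⟨∑ i ∈ range k, a i • x i, ?_⟩
    have hSn : ∀ n, k ≤ n → ∑ i ∈ range n, g i • x i = ∑ i ∈ range k, a i • x i := by
      intro n hn
      rw [← Finset.sum_subset (Finset.range_subset_range.mpr hn)]
      · apply Finset.sum_congr rfl
        intro i hi
        rw [hg]; simp [Finset.mem_range.mp hi]
      · intro i _ hi
        have hik : ¬ i < k := by simpa using hi
        simp [hg, hik]
    rw [StrongCesaro]
    set Lk := ∑ i ∈ range k, a i • x i with hLk
    have hterm0 : ∀ m, k ≤ m → ‖(∑ i ∈ range m, g i • x i) - Lk‖ ^ p = 0 := by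
      intro m hm
      rw [hSn m hm, sub_self, norm_zero, Real.zero_rpow hp.ne']
    set D := ∑ m ∈ range k, ‖(∑ i ∈ range m, g i • x i) - Lk‖ ^ p with hD
    apply Tendsto.congr' (f₁ := fun n : ℕ => (n:ℝ)⁻¹ * D)
    · rw [EventuallyEq, eventually_atTop]
      refine ⟨k, fun n hn => ?_⟩
      congr 1
      rw [hD]
      apply Finset.sum_subset (Finset.range_subset_range.mpr hn)
      intro m _ hm
      exact hterm0 m (by simpa using hm)
    · simpa using tendsto_inv_atTop_nhds_zero_nat.mul_const D
  have hmem : A ∈ SwpSpace p x := by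
    have hclosed : IsClosed (SwpSpace p x) := h2.isClosed
    rw [← hclosed.closure_eq]
    rw [Metric.mem_closure_iff]
    intro ε hε
    rw [Metric.tendsto_atTop] at ha
    obtain ⟨N, hN⟩ := ha (ε/2) (half_pos hε)
    obtain ⟨B, hB, hBcoe⟩ := htrunc N
    refine ⟨B, hB, ?_⟩
    have hdAB : dist A B ≤ ε/2 := by
      apply (BoundedContinuousFunction.dist_le (by linarith)).mpr
      intro i
      rw [hBcoe i, hAcoe i]
      by_cases hik : i < N
      · simp only [if_pos hik, dist_self]; linarith
      · simp only [if_neg hik]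
        exact (hN i (not_lt.mp hik)).le
    linarith
  obtain ⟨L, hL⟩ := hmem
  exact ⟨L, by simpa [hAcoe] using hL⟩

-- (3) → (1)
lemma three_imp_one {p : ℝ} (hp : 0 < p) {x : ℕ → X}
    (h3 : ∀ a : ℕ → ℝ, Tendsto a atTop (nhds 0) →
      ∃ L : X, StrongCesaro p (fun n => ∑ i ∈ range n, a i • x i) L) :
    ∀ f : X →L[ℝ] ℝ, Summable fun i => |f (x i)| := by
  intro f
  by_cases hf0 : f = 0
  · simpa [hf0] using summable_zero
  by_contra hns
  rw [summable_iff_not_tendsto_nat_atTop_of_nonneg (fun n => abs_nonneg _)] at hns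
  have hdiv : Tendsto (fun n : ℕ => ∑ i ∈ range n, |f (x i)|) atTop atTop := not_not.mp hns
  set c : ℕ → ℝ := fun n => ∑ i ∈ range n, |f (x i)| with hc
  have hc0 : ∀ n, 0 ≤ c n := fun n => Finset.sum_nonneg fun i _ => abs_nonneg _
  have hcmono : Monotone c := by
    intro m n hmn
    exact Finset.sum_le_sum_of_subset_of_nonneg (Finset.range_subset_range.mpr hmn)
      (fun i _ _ => abs_nonneg _)
  have hcpos : ∀ n, (0:ℝ) < 1 + c n := fun n => by linarith [hc0 n]
  set a : ℕ → ℝ := fun i => Real.sign (f (x i)) * (1 + c (i+1))⁻¹ with ha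
  have haabs : ∀ i, |a i| ≤ (1 + c (i+1))⁻¹ := by
    intro i
    rw [ha]; dsimp only
    rw [abs_mul, abs_of_pos (inv_pos.mpr (hcpos (i+1)))]
    exact mul_le_of_le_one_left (by positivity) (abs_sign_le_one _)
  have hatend : Tendsto a atTop (nhds 0) := by
    apply squeeze_zero_norm haabs
    apply Tendsto.inv_tendsto_atTop
    apply tendsto_atTop_add_const_left
    exact hdiv.comp (tendsto_add_atTop_nat 1)
  set T : ℕ → ℝ := fun n => ∑ i ∈ range n, |f (x i)| * (1 + c (i+1))⁻¹ with hT
  have hfS : ∀ n, f (∑ i ∈ range n, a i • x i) = T n := by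
    intro n
    rw [map_sum, hT]
    apply Finset.sum_congr rfl
    intro i _
    rw [map_smul, smul_eq_mul, ha]
    dsimp only
    calc Real.sign (f (x i)) * (1 + c (i+1))⁻¹ * f (x i)
        = (Real.sign (f (x i)) * f (x i)) * (1 + c (i+1))⁻¹ := by ring
      _ = |f (x i)| * (1 + c (i+1))⁻¹ := by rw [mySign_mul_self]
  have hTmono : Monotone T := by
    apply monotone_nat_of_le_succ
    intro n
    rw [hT]
    dsimp only
    rw [Finset.sum_range_succ]
    have : 0 ≤ |f (x n)| * (1 + c (n+1))⁻¹ := by positivity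
    linarith
  have hstep : ∀ m, ∃ n, T m + 1/2 ≤ T n := by
    intro m
    obtain ⟨n, hcn, hmn⟩ :=
      ((hdiv.eventually_ge_atTop (1 + 2 * c m)).and (eventually_ge_atTop m)).exists
    refine ⟨n, ?_⟩
    have hsub : T n - T m = ∑ i ∈ Ico m n, |f (x i)| * (1 + c (i+1))⁻¹ := by
      rw [hT]; dsimp only
      rw [Finset.sum_Ico_eq_sub _ hmn]
    have hlow : (c n - c m) * (1 + c n)⁻¹ ≤ ∑ i ∈ Ico m n, |f (x i)| * (1 + c (i+1))⁻¹ := by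
      have : (c n - c m) * (1 + c n)⁻¹ = ∑ i ∈ Ico m n, |f (x i)| * (1 + c n)⁻¹ := by
        rw [← Finset.sum_mul]
        congr 1
        rw [hc]
        rw [Finset.sum_Ico_eq_sub _ hmn]
      rw [this]
      apply Finset.sum_le_sum
      intro i hi
      apply mul_le_mul_of_nonneg_left _ (abs_nonneg _)
      apply inv_anti₀ (hcpos (i+1))
      have : i + 1 ≤ n := Finset.mem_Ico.mp hi |>.2
      linarith [hcmono this]
    have hhalf : (1:ℝ)/2 ≤ (c n - c m) * (1 + c n)⁻¹ := by
      rw [← div_eq_mul_inv, le_div_iff₀ (hcpos n)]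
      have := hcmono hmn
      linarith
    linarith
  have hTub : ∀ B : ℝ, ∃ n, B ≤ T n := by
    have hhalf : ∀ k : ℕ, ∃ n, (k:ℝ)/2 ≤ T n := by
      intro k
      induction k with
      | zero => exact ⟨0, by simp [hT]⟩
      | succ k ih =>
        obtain ⟨n, hn⟩ := ih
        obtain ⟨n', hn'⟩ := hstep n
        exact ⟨n', by push_cast; linarith⟩
    intro B
    obtain ⟨k, hk⟩ := exists_nat_ge (2*B)
    obtain ⟨n, hn⟩ := hhalf k
    exact ⟨n, by linarith⟩
  have hTtend : Tendsto T atTop atTop := tendsto_atTop_atTop_of_monotone hTmono hTub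
  obtain ⟨L, hL⟩ := h3 a hatend
  have hfpos : (0:ℝ) < ‖f‖ := norm_pos_iff.mpr hf0
  have hfreq : ∃ᶠ n in atTop,
      ‖(∑ i ∈ range n, a i • x i) - L‖ ^ p < 1 :=
    cesaro_frequently (fun n => by positivity) hL one_pos
  have hev : ∀ᶠ n in atTop, (1:ℝ) ≤ ‖(∑ i ∈ range n, a i • x i) - L‖ ^ p := by
    filter_upwards [hTtend.eventually_ge_atTop (|f L| + ‖f‖)] with n hn
    set S := ∑ i ∈ range n, a i • x i
    have h1 : T n - f L ≤ |f (S - L)| := by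
      have : f (S - L) = T n - f L := by rw [map_sub, hfS]
      rw [this]
      exact le_abs_self _
    have h2 : |f (S - L)| ≤ ‖f‖ * ‖S - L‖ := by
      have := f.le_opNorm (S - L)
      simpa using this
    have h3' : ‖f‖ * 1 ≤ ‖f‖ * ‖S - L‖ := by
      have : ‖f‖ ≤ T n - f L := by
        have := le_abs_self (f L)
        linarith [neg_abs_le (f L)]
      linarith
    have h4 : (1:ℝ) ≤ ‖S - L‖ := le_of_mul_le_mul_left (by linarith) hfpos
    calc (1:ℝ) = 1 ^ p := (Real.one_rpow p).symm
      _ ≤ ‖S - L‖ ^ p := Real.rpow_le_rpow (by norm_num) h4 hp.le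
  obtain ⟨n, hn1, hn2⟩ := (hev.and_frequently hfreq).exists
  linarith

end X


theorem statement11 {X : Type*} [NormedAddCommGroup X] [NormedSpace ℝ X] [CompleteSpace X]
    (p : ℝ) (hp : 0 < p) (x : ℕ → X) :
    List.TFAE
      [∀ f : X →L[ℝ] ℝ, Summable fun i => |f (x i)|,
       IsComplete (SwpSpace p x),
       ∀ a : ℕ → ℝ, Tendsto a atTop (nhds 0) →
         ∃ L : X, StrongCesaro p (fun n => ∑ i ∈ range n, a i • x i) L] := by
  tfae_have 1 → 2 := fun h1 => one_imp_two hp h1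
  tfae_have 2 → 3 := fun h2 => two_imp_three hp h2
  tfae_have 3 → 1 := fun h3 => three_imp_one hp h3
  tfae_finish
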